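/- Let T ∈ SL(2,ℂ) satisfy i(T* J T − J) ≥ 0 (positive semidefinite). Then T₁ = I T⁻¹ I also satisfies i(T₁* J T₁ − J) ≥ 0, where I = diag(1, −1). -/
import Mathlib


open Matrix
open scoped ComplexOrder

noncomputable def JmatC : Matrix (Fin 2) (Fin 2) ℂ := !![0, -1; 1, 0]

noncomputable def Imat : Matrix (Fin 2) (Fin 2) ℂ := !![1, 0; 0, -1]

set_option maxHeartbeats 1000000 in
theorem conj_inv_preserves_J_contraction (T : Matrix (Fin 2) (Fin 2) ℂ)
    (hdet : T.det = 1)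
    (h : (Complex.I • (Tᴴ * JmatC * T - JmatC)).PosSemidef) :
    (Complex.I • ((Imat * T⁻¹ * Imat)ᴴ * JmatC * (Imat * T⁻¹ * Imat) - JmatC)).PosSemidef := by
  have hT : IsUnit T.det := by simp [hdet]
  have h1 : T * T⁻¹ = 1 := Matrix.mul_nonsing_inv T hT
  have h1' : T⁻¹ * T = 1 := Matrix.nonsing_inv_mul T hT
  have h2 : (T⁻¹)ᴴ * Tᴴ = 1 := by rw [← conjTranspose_mul, h1, conjTranspose_one]
  have hIH : Imatᴴ = Imat := by
    ext i j
    fin_cases i <;> fin_cases j <;> simp [Imat]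
  have hII : Imat * Imat = 1 := by
    ext i j
    fin_cases i <;> fin_cases j <;>
      simp [Imat, Matrix.mul_apply, Fin.sum_univ_two, Matrix.one_apply]
  have hIJI : Imat * JmatC * Imat = -JmatC := by
    ext i j
    fin_cases i <;> fin_cases j <;>
      simp [Imat, JmatC, Matrix.mul_apply, Fin.sum_univ_two]
  have e1 : ∀ M : Matrix (Fin 2) (Fin 2) ℂ, T * (T⁻¹ * M) = M := fun M => by
    rw [← mul_assoc, h1, one_mul]
  have e2 : ∀ M : Matrix (Fin 2) (Fin 2) ℂ, (T⁻¹)ᴴ * (Tᴴ * M) = M := fun M => by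
    rw [← mul_assoc, h2, one_mul]
  have e3 : ∀ M : Matrix (Fin 2) (Fin 2) ℂ, Imat * (Imat * M) = M := fun M => by
    rw [← mul_assoc, hII, one_mul]
  have e4 : ∀ M : Matrix (Fin 2) (Fin 2) ℂ, Imat * (JmatC * (Imat * M)) = -(JmatC * M) :=
    fun M => by rw [← mul_assoc, ← mul_assoc, hIJI, neg_mul]
  have hkey : (Imat * T⁻¹ * Imat)ᴴ * JmatC * (Imat * T⁻¹ * Imat) - JmatC
      = (T⁻¹ * Imat)ᴴ * (Tᴴ * JmatC * T - JmatC) * (T⁻¹ * Imat) := by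
    simp only [conjTranspose_mul, hIH, Matrix.mul_sub, Matrix.sub_mul, mul_assoc,
      e1, e2, e3, e4]
    rw [show Imat * (JmatC * Imat) = -JmatC by rw [← mul_assoc, hIJI]]
    rw [mul_neg, mul_neg]
    abel
  rw [hkey, ← Matrix.smul_mul, ← Matrix.mul_smul]
  exact Matrix.PosSemidef.conjTranspose_mul_mul_same h (T⁻¹ * Imat)
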